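/- Let d ≥ 1. Let a^H : ℤ^d → ℂ be the d-dimensional Haar low-pass filter, and for each ordered pair (γ₁, γ₂) of distinct elements of {0,1}^d ⊆ ℤ^d let b_{γ₁,γ₂} := 2^{-d}(δ_{γ₁} − δ_{γ₂}). Then for all γ ∈ {0,1}^d and all n ∈ ℤ^d one has Σ_{k∈ℤ^d} a^H(γ+2k)·conj(a^H(n+γ+2k)) + (1/2)·Σ_{(γ₁,γ₂): γ₁,γ₂∈{0,1}^d, γ₁≠γ₂} Σ_{k∈ℤ^d} b_{γ₁,γ₂}(γ+2k)·conj(b_{γ₁,γ₂}(n+γ+2k)) = 2^{-d}·δ(n). (The factor 1/2 accounts for each unordered pair being counted twice; equivalently, choosing one filter per unordered pair of distinct vertices of {0,1}^d yields a tight framelet filter bank with s = 2^{d-1}(2^d − 1) high-pass filters.) -/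

import Mathlib

open scoped BigOperators

/-- The `d`-dimensional Haar low-pass filter: value `2^{-d}` on `{0,1}^d ⊆ ℤ^d`, zero elsewhere. -/
noncomputable def haarFilter (d : ℕ) : (Fin d → ℤ) → ℂ :=
  fun k => if ∀ i, k i = 0 ∨ k i = 1 then ((2 : ℂ) ^ d)⁻¹ else 0

/-- Embedding of `{0,1}^d` (modeled by `Fin d → Bool`) into `ℤ^d`. -/
def boolToInt {d : ℕ} (γ : Fin d → Bool) : Fin d → ℤ :=
  fun i => if γ i then 1 else 0

/-- The high-pass filter `2^{-d}(δ_{γ₁} - δ_{γ₂})`. -/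
noncomputable def haarHighPass (d : ℕ) (γ₁ γ₂ : Fin d → ℤ) : (Fin d → ℤ) → ℂ :=
  fun k => ((2 : ℂ) ^ d)⁻¹ * ((if k = γ₁ then 1 else 0) - (if k = γ₂ then 1 else 0))

/-- The `d`-dimensional Haar low-pass filter together with the high-pass filters
`2^{-d}(δ_{γ₁} - δ_{γ₂})`, one for each unordered pair of distinct vertices
`γ₁, γ₂ ∈ {0,1}^d` (here summed over ordered pairs with a factor `1/2`), forms a
`d`-dimensional dyadic tight framelet filter bank. -/
theorem haar_directional_tffb (d : ℕ) (hd : 1 ≤ d) (γ : Fin d → ℤ)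
    (hγ : ∀ i, γ i = 0 ∨ γ i = 1) (n : Fin d → ℤ) :
    (∑ᶠ k : Fin d → ℤ,
        haarFilter d (fun i => γ i + 2 * k i) *
          (starRingEnd ℂ) (haarFilter d (fun i => n i + γ i + 2 * k i))) +
      (1 / 2 : ℂ) *
        ∑ γ₁ : Fin d → Bool, ∑ γ₂ : Fin d → Bool,
          (if γ₁ ≠ γ₂ then
            ∑ᶠ k : Fin d → ℤ,
              haarHighPass d (boolToInt γ₁) (boolToInt γ₂) (fun i => γ i + 2 * k i) *
                (starRingEnd ℂ)
                  (haarHighPass d (boolToInt γ₁) (boolToInt γ₂) (fun i => n i + γ i + 2 * k i))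
          else 0) =
      ((2 : ℂ) ^ d)⁻¹ * (if n = 0 then 1 else 0) := by
  classical
  set c : ℂ := ((2 : ℂ) ^ d)⁻¹ with hc
  have hN0 : ((2 : ℂ) ^ d) ≠ 0 := pow_ne_zero _ two_ne_zero
  have hconjc : (starRingEnd ℂ) c = c := by
    simp [hc, map_inv₀, map_pow, Complex.conj_ofNat]
  set e : Fin d → ℤ := fun i => n i + γ i with he
  -- collapse low-pass finsum
  have hlow : (∑ᶠ k : Fin d → ℤ,
      haarFilter d (fun i => γ i + 2 * k i) *
        (starRingEnd ℂ) (haarFilter d (fun i => n i + γ i + 2 * k i)))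
      = haarFilter d γ * (starRingEnd ℂ) (haarFilter d e) := by
    rw [finsum_eq_single _ (0 : Fin d → ℤ)]
    · simp [he]
    · intro k hk
      have hz : haarFilter d (fun i => γ i + 2 * k i) = 0 := by
        unfold haarFilter
        rw [if_neg]
        intro h
        apply hk
        funext i
        simp only [Pi.zero_apply]
        have h2 := h i
        dsimp only at h2
        rcases hγ i with h1 | h1 <;> rcases h2 with h2 | h2 <;> omega
      rw [hz, zero_mul]
  -- collapse high-pass finsums
  have hhigh : ∀ b₁ b₂ : Fin d → Bool,
      (∑ᶠ k : Fin d → ℤ,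
        haarHighPass d (boolToInt b₁) (boolToInt b₂) (fun i => γ i + 2 * k i) *
          (starRingEnd ℂ)
            (haarHighPass d (boolToInt b₁) (boolToInt b₂) (fun i => n i + γ i + 2 * k i)))
      = haarHighPass d (boolToInt b₁) (boolToInt b₂) γ *
          (starRingEnd ℂ) (haarHighPass d (boolToInt b₁) (boolToInt b₂) e) := by
    intro b₁ b₂
    rw [finsum_eq_single _ (0 : Fin d → ℤ)]
    · simp [he]
    · intro k hk
      have hz : haarHighPass d (boolToInt b₁) (boolToInt b₂) (fun i => γ i + 2 * k i) = 0 := by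
        unfold haarHighPass
        have hb : ∀ b : Fin d → Bool, (fun i => γ i + 2 * k i) ≠ boolToInt b := by
          intro b h
          apply hk
          funext i
          simp only [Pi.zero_apply]
          have := congrFun h i
          simp only [boolToInt] at this
          rcases hγ i with h1 | h1 <;> cases hb : b i <;> simp [hb] at this <;> omega
        rw [if_neg (hb b₁), if_neg (hb b₂)]
        ring
      rw [hz, zero_mul]
  rw [hlow]
  simp_rw [hhigh]
  -- indicator functions on the boolean cube
  set p : (Fin d → Bool) → ℂ := fun b => if γ = boolToInt b then 1 else 0 with hp
  set q : (Fin d → Bool) → ℂ := fun b => if e = boolToInt b then 1 else 0 with hq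
  have hinj : Function.Injective (boolToInt (d := d)) := by
    intro a b h
    funext i
    have := congrFun h i
    simp only [boolToInt] at this
    cases ha : a i <;> cases hb : b i <;> simp [ha, hb] at this ⊢
  have sum_ind : ∀ x : Fin d → ℤ,
      (∑ b : Fin d → Bool, (if x = boolToInt b then (1 : ℂ) else 0)) =
        (if ∀ i, x i = 0 ∨ x i = 1 then 1 else 0) := by
    intro x
    by_cases h : ∀ i, x i = 0 ∨ x i = 1
    · set b0 : Fin d → Bool := fun i => decide (x i = 1) with hb0
      have hx : x = boolToInt b0 := by
        funext i
        rcases h i with h1 | h1 <;> simp [boolToInt, hb0, h1]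
      have hiff : ∀ b, (x = boolToInt b) ↔ (b = b0) := by
        intro b
        constructor
        · intro hxb
          exact hinj (hxb.symm.trans hx)
        · rintro rfl; exact hx
      simp_rw [hiff]
      simp [h]
    · have : ∀ b : Fin d → Bool, x ≠ boolToInt b := by
        intro b hxb
        apply h
        intro i
        rw [hxb]
        simp only [boolToInt]
        cases b i <;> simp
      simp [this, h]
  have hP : (∑ b : Fin d → Bool, p b) = 1 := by
    rw [hp]
    rw [sum_ind γ, if_pos hγ]
  set Q : ℂ := if ∀ i, e i = 0 ∨ e i = 1 then 1 else 0 with hQdef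
  have hQ : (∑ b : Fin d → Bool, q b) = Q := sum_ind e
  have hR : (∑ b : Fin d → Bool, p b * q b) = (if n = 0 then (1 : ℂ) else 0) := by
    by_cases hn : n = 0
    · have heγ : e = γ := by funext i; simp [he, hn]
      have : ∀ b, p b * q b = p b := by
        intro b
        by_cases hb : γ = boolToInt b <;> simp [hp, hq, heγ, hb]
      simp_rw [this]
      rw [hP, if_pos hn]
    · have heγ : e ≠ γ := by
        intro h
        apply hn
        funext i
        simp only [Pi.zero_apply]
        have := congrFun h i
        simp only [he] at this
        omega
      have : ∀ b, p b * q b = 0 := by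
        intro b
        by_cases hb : γ = boolToInt b
        · have : e ≠ boolToInt b := fun h => heγ (h.trans hb.symm)
          simp [hq, this]
        · simp [hp, hb]
      simp [this, hn]
  -- rewrite the filter values
  have hFγ : haarFilter d γ = c := by simp [haarFilter, hγ, hc]
  have hFe : (starRingEnd ℂ) (haarFilter d e) = c * Q := by
    rw [hQdef]
    by_cases h : ∀ i, e i = 0 ∨ e i = 1 <;> simp [haarFilter, h, hconjc, hc, Complex.conj_ofNat]
  have hHγ : ∀ b₁ b₂ : Fin d → Bool,
      haarHighPass d (boolToInt b₁) (boolToInt b₂) γ = c * (p b₁ - p b₂) := by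
    intro b₁ b₂; simp [haarHighPass, hp, hc]
  have hHe : ∀ b₁ b₂ : Fin d → Bool,
      (starRingEnd ℂ) (haarHighPass d (boolToInt b₁) (boolToInt b₂) e) = c * (q b₁ - q b₂) := by
    intro b₁ b₂
    simp only [haarHighPass, map_mul, map_sub, apply_ite (starRingEnd ℂ), map_one, map_zero]
    rw [hconjc]
  -- drop the ≠ condition (diagonal terms vanish)
  have hdrop : ∀ b₁ b₂ : Fin d → Bool,
      (if b₁ ≠ b₂ then
        haarHighPass d (boolToInt b₁) (boolToInt b₂) γ *
          (starRingEnd ℂ) (haarHighPass d (boolToInt b₁) (boolToInt b₂) e)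
      else 0) = (c * c) * ((p b₁ - p b₂) * (q b₁ - q b₂)) := by
    intro b₁ b₂
    by_cases h : b₁ = b₂
    · subst h; simp
    · rw [if_pos h, hHγ, hHe]; ring
  simp_rw [hdrop]
  -- the double sum
  have hcard : (Finset.univ : Finset (Fin d → Bool)).card = 2 ^ d := by simp
  have hexp : ∀ b₁ : Fin d → Bool,
      (∑ b₂ : Fin d → Bool, (c * c) * ((p b₁ - p b₂) * (q b₁ - q b₂))) =
        (c * c) * ((2 ^ d : ℂ) * (p b₁ * q b₁) - p b₁ * Q - 1 * q b₁ +
          (∑ b : Fin d → Bool, p b * q b)) := by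
    intro b₁
    rw [← Finset.mul_sum]
    congr 1
    have : ∀ b₂ : Fin d → Bool, (p b₁ - p b₂) * (q b₁ - q b₂) =
        p b₁ * q b₁ - p b₁ * q b₂ - p b₂ * q b₁ + p b₂ * q b₂ := by intros; ring
    simp_rw [this]
    rw [Finset.sum_add_distrib, Finset.sum_sub_distrib, Finset.sum_sub_distrib,
      Finset.sum_const, ← Finset.mul_sum, ← Finset.sum_mul, hP, hQ, hcard]
    push_cast
    ring
  simp_rw [hexp]
  rw [← Finset.mul_sum]
  rw [Finset.sum_add_distrib, Finset.sum_sub_distrib, Finset.sum_sub_distrib,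
    ← Finset.mul_sum, ← Finset.mul_sum, ← Finset.sum_mul, Finset.sum_const, hP, hQ, hR, hcard]
  rw [hFγ, hFe]
  set R : ℂ := if n = 0 then (1 : ℂ) else 0 with hRdef
  have hcc : c * c * ((2 : ℂ) ^ d) = c := by
    rw [hc]; field_simp
  rw [nsmul_eq_mul]
  push_cast
  linear_combination R * hcc
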